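/- arXiv:1411.2991 — 3 statements merged into one kernel-verified Lean document; each statement's English description precedes it below -/
import Mathlib

section
/- For any α, t > 0, any nonnegative measurable kernel p(s,x,y), and any measurable f : M → ℝ, one has (1 - e^{-αt}) · sup_{x∈M} ∫_M (∫_0^∞ e^{-αs} p(s,x,y) ds) |f(y)| dμ(y) ≤ sup_{x∈M} ∫_0^t ∫_M p(s,x,y) |f(y)| dμ(y) ds, provided the kernel satisfies the semigroup (Chapman–Kolmogorov) property ∫_M p(s,x,z) p(u,z,y) dμ(z) = p(s+u,x,y) and sub-Markov property ∫_M p(s,x,y) dμ(y) ≤ 1. -/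
open MeasureTheory Set ENNReal

/-- For a nonnegative measurable kernel `p` satisfying the Chapman–Kolmogorov
identity and the sub-Markov property, for all `α, t > 0` and measurable `f`,
`(1 - e^{-αt}) · sup_x ∫_M (∫_0^∞ e^{-αs} p(s,x,y) ds)|f(y)| dμ(y)
   ≤ sup_x ∫_0^t ∫_M p(s,x,y)|f(y)| dμ(y) ds`. -/
theorem resolvent_le_time_integral
    {M : Type*} [MeasurableSpace M] (μ : Measure M) [SigmaFinite μ]
    (p : ℝ → M → M → ℝ≥0∞) (f : M → ℝ)
    (hp : Measurable fun q : ℝ × M × M => p q.1 q.2.1 q.2.2)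
    (hf : Measurable f)
    (hCK : ∀ s u : ℝ, 0 < s → 0 < u → ∀ x y : M,
      ∫⁻ z, p s x z * p u z y ∂μ = p (s + u) x y)
    (hsub : ∀ s : ℝ, 0 < s → ∀ x : M, ∫⁻ y, p s x y ∂μ ≤ 1)
    (α t : ℝ) (hα : 0 < α) (ht : 0 < t) :
    ENNReal.ofReal (1 - Real.exp (-α * t)) *
        (⨆ x : M, ∫⁻ y,
          (∫⁻ s in Ioi (0:ℝ), ENNReal.ofReal (Real.exp (-α * s)) * p s x y) *
            ENNReal.ofReal |f y| ∂μ)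
      ≤ ⨆ x : M, ∫⁻ s in Ioc (0:ℝ) t, ∫⁻ y, p s x y * ENNReal.ofReal |f y| ∂μ := by
  set c : M → ℝ≥0∞ := fun y => ENNReal.ofReal |f y| with hc
  have hcm : Measurable c := hf.abs.ennreal_ofReal
  set F : ℝ → M → ℝ≥0∞ := fun s x => ∫⁻ y, p s x y * c y ∂μ with hFdef
  set S : ℝ≥0∞ := ⨆ x : M, ∫⁻ s in Ioc (0:ℝ) t, F s x with hSdef
  -- basic measurability helpers
  have hpm : ∀ (s : ℝ) (x : M), Measurable fun y : M => p s x y := fun s x =>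
    hp.comp (measurable_const.prodMk (measurable_const.prodMk measurable_id))
  have hpzm : ∀ (u : ℝ) (y : M), Measurable fun z : M => p u z y := fun u y =>
    hp.comp (measurable_const.prodMk (measurable_id.prodMk measurable_const))
  have hFm : Measurable fun q : ℝ × M => F q.1 q.2 := by
    apply Measurable.lintegral_prod_right
    exact (hp.comp (measurable_fst.fst.prodMk
      (measurable_fst.snd.prodMk measurable_snd))).mul (hcm.comp measurable_snd)
  have hFx : ∀ x : M, Measurable fun s : ℝ => F s x := fun x =>
    hFm.comp (measurable_id.prodMk measurable_const)
  have hFs : ∀ s : ℝ, Measurable fun z : M => F s z := fun s =>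
    hFm.comp (measurable_const.prodMk measurable_id)
  -- key identity from Chapman–Kolmogorov
  have hA : ∀ s u : ℝ, 0 < s → 0 < u → ∀ x : M,
      F (s + u) x = ∫⁻ z, p s x z * F u z ∂μ := by
    intro s u hs hu x
    have h0 : F (s + u) x = ∫⁻ y, (∫⁻ z, p s x z * p u z y ∂μ) * c y ∂μ := by
      simp only [hFdef]
      refine lintegral_congr fun y => ?_
      rw [hCK s u hs hu x y]
    rw [h0]
    have hmeas : ∀ y : M, Measurable fun z : M => p s x z * p u z y := fun y =>
      (hpm s x).mul (hpzm u y)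
    have hinner : ∀ z : M, Measurable fun y : M => p u z y * c y := fun z =>
      (hpm u z).mul hcm
    calc ∫⁻ y, (∫⁻ z, p s x z * p u z y ∂μ) * c y ∂μ
        = ∫⁻ y, ∫⁻ z, p s x z * p u z y * c y ∂μ ∂μ := by
          refine lintegral_congr fun y => ?_
          rw [lintegral_mul_const'' _ ((hmeas y).aemeasurable)]
      _ = ∫⁻ z, ∫⁻ y, p s x z * p u z y * c y ∂μ ∂μ := by
          rw [lintegral_lintegral_swap]
          apply Measurable.aemeasurable
          exact ((hp.comp (measurable_const.prodMk
            (measurable_const.prodMk measurable_snd))).mul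
            (hp.comp (measurable_const.prodMk
              (measurable_snd.prodMk measurable_fst)))).mul (hcm.comp measurable_fst)
      _ = ∫⁻ z, p s x z * F u z ∂μ := by
          refine lintegral_congr fun z => ?_
          simp only [mul_assoc]
          rw [lintegral_const_mul'' _ (hinner z).aemeasurable]
  -- the block estimate
  have hB : ∀ (n : ℕ) (x : M), ∫⁻ u in Ioc (0:ℝ) t, F ((n : ℝ) * t + u) x ≤ S := by
    intro n x
    rcases Nat.eq_zero_or_pos n with hn | hn
    · subst hn
      simp only [Nat.cast_zero, zero_mul, zero_add]
      exact le_iSup (fun x => ∫⁻ s in Ioc (0:ℝ) t, F s x) x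
    · have hnt : 0 < (n : ℝ) * t := mul_pos (by exact_mod_cast hn) ht
      have h1 : ∫⁻ u in Ioc (0:ℝ) t, F ((n : ℝ) * t + u) x
          = ∫⁻ u in Ioc (0:ℝ) t, (∫⁻ z, p ((n:ℝ)*t) x z * F u z ∂μ) := by
        refine setLIntegral_congr_fun measurableSet_Ioc ?_
        intro u hu
        exact hA _ u hnt hu.1 x
      rw [h1]
      have h2 : ∫⁻ u in Ioc (0:ℝ) t, (∫⁻ z, p ((n:ℝ)*t) x z * F u z ∂μ)
          = ∫⁻ z, (∫⁻ u in Ioc (0:ℝ) t, p ((n:ℝ)*t) x z * F u z) ∂μ := by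
        rw [lintegral_lintegral_swap]
        apply Measurable.aemeasurable
        exact ((hp.comp (measurable_const.prodMk
          (measurable_const.prodMk measurable_snd))).mul
          (hFm.comp (measurable_fst.prodMk measurable_snd)))
      rw [h2]
      calc ∫⁻ z, (∫⁻ u in Ioc (0:ℝ) t, p ((n:ℝ)*t) x z * F u z) ∂μ
          = ∫⁻ z, p ((n:ℝ)*t) x z * (∫⁻ u in Ioc (0:ℝ) t, F u z) ∂μ := by
            refine lintegral_congr fun z => ?_
            rw [lintegral_const_mul'' _ ((hFx z).aemeasurable.restrict)]
        _ ≤ ∫⁻ z, p ((n:ℝ)*t) x z * S ∂μ := by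
            refine lintegral_mono fun z => ?_
            exact mul_le_mul_right (le_iSup (fun x => ∫⁻ s in Ioc (0:ℝ) t, F s x) z) _
        _ = (∫⁻ z, p ((n:ℝ)*t) x z ∂μ) * S :=
            lintegral_mul_const'' _ (hpm _ x).aemeasurable
        _ ≤ 1 * S := mul_le_mul_left (hsub _ hnt x) S
        _ = S := one_mul S
  -- translation identity
  have htrans : ∀ (n : ℕ) (x : M),
      ∫⁻ s in Ioc ((n:ℝ)*t) ((n:ℝ)*t + t), F s x
        = ∫⁻ u in Ioc (0:ℝ) t, F ((n:ℝ)*t + u) x := by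
    intro n x
    have hmp : MeasurePreserving (fun u : ℝ => (n:ℝ)*t + u) volume volume :=
      measurePreserving_add_left volume ((n:ℝ)*t)
    have hemb : MeasurableEmbedding (fun u : ℝ => (n:ℝ)*t + u) :=
      (MeasurableEquiv.addLeft ((n:ℝ)*t)).measurableEmbedding
    have key := hmp.setLIntegral_comp_preimage_emb hemb (fun s => F s x)
      (Ioc ((n:ℝ)*t) ((n:ℝ)*t + t))
    have hpre : (fun u : ℝ => (n:ℝ)*t + u) ⁻¹' Ioc ((n:ℝ)*t) ((n:ℝ)*t + t)
        = Ioc (0:ℝ) t := by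
      ext u
      simp only [mem_preimage, mem_Ioc]
      constructor
      · rintro ⟨h1, h2⟩; constructor <;> linarith
      · rintro ⟨h1, h2⟩; constructor <;> linarith
    rw [hpre] at key
    exact key.symm
  -- decomposition of Ioi 0
  have hunion : Ioi (0:ℝ) = ⋃ n : ℕ, Ioc ((n:ℝ)*t) ((n:ℝ)*t + t) := by
    ext x
    simp only [mem_Ioi, mem_iUnion, mem_Ioc]
    constructor
    · intro hx
      refine ⟨⌈x/t⌉₊ - 1, ?_, ?_⟩
      · have h1 : 1 ≤ ⌈x/t⌉₊ := Nat.one_le_ceil_iff.mpr (div_pos hx ht)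
        have hlt : (⌈x/t⌉₊ - 1 : ℕ) < ⌈x/t⌉₊ := by omega
        have := Nat.lt_ceil.mp hlt
        calc ((⌈x/t⌉₊ - 1 : ℕ) : ℝ) * t < (x/t) * t := mul_lt_mul_of_pos_right this ht
          _ = x := div_mul_cancel₀ x ht.ne'
      · have h1 : 1 ≤ ⌈x/t⌉₊ := Nat.one_le_ceil_iff.mpr (div_pos hx ht)
        have h2 : x / t ≤ (⌈x/t⌉₊ : ℝ) := Nat.le_ceil _
        have h3 : ((⌈x/t⌉₊ - 1 : ℕ) : ℝ) + 1 = (⌈x/t⌉₊ : ℝ) := by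
          have h4 : (⌈x/t⌉₊ - 1 : ℕ) + 1 = ⌈x/t⌉₊ := by omega
          exact_mod_cast congrArg (Nat.cast : ℕ → ℝ) h4
        calc x = (x/t) * t := (div_mul_cancel₀ x ht.ne').symm
          _ ≤ (⌈x/t⌉₊ : ℝ) * t := mul_le_mul_of_nonneg_right h2 ht.le
          _ = ((⌈x/t⌉₊ - 1 : ℕ) : ℝ) * t + t := by rw [← h3]; ring
    · rintro ⟨n, hn1, _⟩
      exact lt_of_le_of_lt (mul_nonneg (Nat.cast_nonneg n) ht.le) hn1
  have hdisj : Pairwise (Function.onFun Disjoint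
      fun n : ℕ => Ioc ((n:ℝ)*t) ((n:ℝ)*t + t)) := by
    intro m n hmn
    apply Set.Ioc_disjoint_Ioc.mpr
    rcases lt_or_gt_of_ne hmn with h | h
    · have hle : (m:ℝ) + 1 ≤ (n:ℝ) := by exact_mod_cast h
      calc min ((m:ℝ)*t + t) ((n:ℝ)*t + t) ≤ (m:ℝ)*t + t := min_le_left _ _
        _ ≤ (n:ℝ)*t := by nlinarith
        _ ≤ max ((m:ℝ)*t) ((n:ℝ)*t) := le_max_right _ _
    · have hle : (n:ℝ) + 1 ≤ (m:ℝ) := by exact_mod_cast h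
      calc min ((m:ℝ)*t + t) ((n:ℝ)*t + t) ≤ (n:ℝ)*t + t := min_le_right _ _
        _ ≤ (m:ℝ)*t := by nlinarith
        _ ≤ max ((m:ℝ)*t) ((n:ℝ)*t) := le_max_left _ _
  -- rewrite and bound the resolvent integral
  set r : ℝ≥0∞ := ENNReal.ofReal (Real.exp (-α * t)) with hrdef
  have hRx : ∀ x : M,
      (∫⁻ y, (∫⁻ s in Ioi (0:ℝ), ENNReal.ofReal (Real.exp (-α * s)) * p s x y) * c y ∂μ)
        ≤ (1 - r)⁻¹ * S := by
    intro x
    have hesm : ∀ y : M, Measurable fun s : ℝ =>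
        ENNReal.ofReal (Real.exp (-α * s)) * p s x y := fun y =>
      ((measurable_id.const_mul (-α)).exp.ennreal_ofReal).mul
        (hp.comp (measurable_id.prodMk (measurable_const.prodMk measurable_const)))
    have hpc : ∀ s : ℝ, Measurable fun y : M => p s x y * c y := fun s =>
      (hpm s x).mul hcm
    have step1 : (∫⁻ y, (∫⁻ s in Ioi (0:ℝ), ENNReal.ofReal (Real.exp (-α * s)) * p s x y) * c y ∂μ)
        = ∫⁻ s in Ioi (0:ℝ), ENNReal.ofReal (Real.exp (-α * s)) * F s x := by
      calc (∫⁻ y, (∫⁻ s in Ioi (0:ℝ), ENNReal.ofReal (Real.exp (-α * s)) * p s x y) * c y ∂μ)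
          = ∫⁻ y, (∫⁻ s in Ioi (0:ℝ), ENNReal.ofReal (Real.exp (-α * s)) * p s x y * c y) ∂μ := by
            refine lintegral_congr fun y => ?_
            rw [lintegral_mul_const'' _ ((hesm y).aemeasurable.restrict)]
        _ = ∫⁻ s in Ioi (0:ℝ), (∫⁻ y, ENNReal.ofReal (Real.exp (-α * s)) * p s x y * c y ∂μ) := by
            rw [lintegral_lintegral_swap]
            apply Measurable.aemeasurable
            exact (((measurable_snd.const_mul (-α)).exp.ennreal_ofReal).mul
              (hp.comp (measurable_snd.prodMk (measurable_const.prodMk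
                measurable_fst)))).mul (hcm.comp measurable_fst)
        _ = ∫⁻ s in Ioi (0:ℝ), ENNReal.ofReal (Real.exp (-α * s)) * F s x := by
            refine lintegral_congr fun s => ?_
            simp only [mul_assoc]
            rw [lintegral_const_mul'' _ (hpc s).aemeasurable]
    rw [step1, hunion, lintegral_iUnion (fun n => measurableSet_Ioc) hdisj]
    have hterm : ∀ n : ℕ,
        ∫⁻ s in Ioc ((n:ℝ)*t) ((n:ℝ)*t + t), ENNReal.ofReal (Real.exp (-α * s)) * F s x
          ≤ r ^ n * S := by
      intro n
      have hb : ∫⁻ s in Ioc ((n:ℝ)*t) ((n:ℝ)*t + t), ENNReal.ofReal (Real.exp (-α * s)) * F s x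
          ≤ ∫⁻ s in Ioc ((n:ℝ)*t) ((n:ℝ)*t + t),
            ENNReal.ofReal (Real.exp (-α * ((n:ℝ)*t))) * F s x := by
        refine setLIntegral_mono_ae ((measurable_const.mul (hFx x)).aemeasurable.restrict) ?_
        filter_upwards with s hs
        refine mul_le_mul_left (ENNReal.ofReal_le_ofReal (Real.exp_le_exp.mpr ?_)) _
        have hns : (n:ℝ)*t ≤ s := hs.1.le
        nlinarith
      refine hb.trans ?_
      rw [lintegral_const_mul'' _ ((hFx x).aemeasurable.restrict)]
      have hr : ENNReal.ofReal (Real.exp (-α * ((n:ℝ)*t))) = r ^ n := by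
        rw [hrdef, ← ENNReal.ofReal_pow (Real.exp_nonneg _), ← Real.exp_nat_mul]
        ring_nf
      rw [hr]
      refine mul_le_mul_right ?_ _
      rw [htrans n x]
      exact hB n x
    calc ∑' n : ℕ, ∫⁻ s in Ioc ((n:ℝ)*t) ((n:ℝ)*t + t),
            ENNReal.ofReal (Real.exp (-α * s)) * F s x
        ≤ ∑' n : ℕ, r ^ n * S := ENNReal.tsum_le_tsum hterm
      _ = (∑' n : ℕ, r ^ n) * S := ENNReal.tsum_mul_right
      _ = (1 - r)⁻¹ * S := by rw [ENNReal.tsum_geometric]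
  -- conclude
  rw [ENNReal.mul_iSup]
  refine iSup_le fun x => ?_
  refine le_trans (mul_le_mul_right (hRx x) _) ?_
  rw [← mul_assoc]
  have h1mr : (1 : ℝ≥0∞) - r = ENNReal.ofReal (1 - Real.exp (-α * t)) := by
    rw [hrdef, ENNReal.ofReal_sub _ (Real.exp_nonneg _), ENNReal.ofReal_one]
  calc ENNReal.ofReal (1 - Real.exp (-α * t)) * (1 - r)⁻¹ * S
      ≤ 1 * S := by
        refine mul_le_mul_left ?_ S
        rw [← h1mr]
        exact ENNReal.mul_inv_le_one _
    _ = S := one_mul S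
end

section
/- If a quadratic form q on a Hilbert space satisfies |q(u)| ≤ a·Q₀(u) + b·‖u‖² for all u in the form domain of a closed nonnegative densely defined form Q₀, with a ∈ [0,1) and b ≥ 0, then the form sum Q₀ + q with domain D(Q₀) is closed, densely defined, and semibounded from below (by -b). -/
open MeasureTheory Set ENNReal

open Filter

section Generic
variable {G : Type*} [AddCommGroup G]

/-- polarization of a (real-valued) quadratic functional -/
noncomputable def polg (g : G → ℝ) (x y : G) : ℝ := (g (x + y) - g x - g y) / 2

lemma polg_comm (g : G → ℝ) (x y : G) : polg g x y = polg g y x := by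
  unfold polg; rw [add_comm]; ring

lemma g_expand (g : G → ℝ) (x y : G) : g (x + y) = g x + 2 * polg g x y + g y := by
  unfold polg; ring

/-- bundle of hypotheses: `S` subgroup-closed, `g` satisfies the parallelogram law on `S`. -/
structure IsQuad (S : Set G) (g : G → ℝ) : Prop where
  zero_mem : (0:G) ∈ S
  add_mem : ∀ x ∈ S, ∀ y ∈ S, x + y ∈ S
  sub_mem : ∀ x ∈ S, ∀ y ∈ S, x - y ∈ S
  par : ∀ x ∈ S, ∀ y ∈ S, g (x + y) + g (x - y) = 2 * g x + 2 * g y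

namespace IsQuad

variable {S : Set G} {g : G → ℝ} (hq : IsQuad S g)
include hq

lemma neg_mem {x : G} (hx : x ∈ S) : -x ∈ S := by
  have := hq.sub_mem 0 hq.zero_mem x hx
  simpa using this

lemma g_zero : g 0 = 0 := by
  have := hq.par 0 hq.zero_mem 0 hq.zero_mem
  simp at this
  linarith

lemma g_even {x : G} (hx : x ∈ S) : g (-x) = g x := by
  have h := hq.par 0 hq.zero_mem x hx
  have h0' : g 0 = 0 := hq.g_zero
  simp only [zero_add, zero_sub] at h
  linarith

lemma pol3 {x y z : G} (hx : x ∈ S) (hy : y ∈ S) (hz : z ∈ S) :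
    g (x + y + z) = g (x + y) + g (y + z) + g (x + z) - g x - g y - g z := by
  have A := hq.par (x + z) (hq.add_mem x hx z hz) y hy
  have B := hq.par (y + z) (hq.add_mem y hy z hz) x hx
  have C := hq.par (x - y) (hq.sub_mem x hx y hy) z hz
  have Dd := hq.par x hx y hy
  have E : g ((y + z) - x) = g ((x - y) - z) := by
    have h1 : (y + z) - x = -((x - y) - z) := by abel
    rw [h1, hq.g_even (hq.sub_mem (x - y) (hq.sub_mem x hx y hy) z hz)]
  have e1 : (x + z) + y = x + y + z := by abel
  have e2 : (x + z) - y = (x - y) + z := by abel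
  have e3 : (y + z) + x = x + y + z := by abel
  rw [e1, e2] at A
  rw [e3] at B
  linarith

lemma polg_add_left {x y z : G} (hx : x ∈ S) (hy : y ∈ S) (hz : z ∈ S) :
    polg g (x + y) z = polg g x z + polg g y z := by
  have h3 := hq.pol3 hx hy hz
  have Dd := hq.par x hx y hy
  unfold polg
  linarith

lemma polg_zero_left (z : G) : polg g 0 z = 0 := by
  unfold polg
  rw [zero_add, hq.g_zero]
  ring

lemma polg_neg_left {x z : G} (hx : x ∈ S) (hz : z ∈ S) :
    polg g (-x) z = - polg g x z := by
  have h := hq.polg_add_left hx (hq.neg_mem hx) hz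
  rw [add_neg_cancel, hq.polg_zero_left] at h
  linarith

lemma addQ {g2 : G → ℝ} (hq2 : IsQuad S g2) : IsQuad S (fun x => g x + g2 x) := by
  refine ⟨hq.zero_mem, hq.add_mem, hq.sub_mem, fun x hx y hy => ?_⟩
  have h1 := hq.par x hx y hy
  have h2 := hq2.par x hx y hy
  linarith

lemma smulQ (c : ℝ) : IsQuad S (fun x => c * g x) := by
  refine ⟨hq.zero_mem, hq.add_mem, hq.sub_mem, fun x hx y hy => ?_⟩
  have h1 := hq.par x hx y hy
  linear_combination c * h1

lemma nsmul_mem {x : G} (hx : x ∈ S) (n : ℕ) : (n • x) ∈ S := by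
  induction n with
  | zero => simpa using hq.zero_mem
  | succ k ih => rw [succ_nsmul]; exact hq.add_mem _ ih _ hx

lemma polg_nsmul_left {x z : G} (hx : x ∈ S) (hz : z ∈ S) (n : ℕ) :
    polg g (n • x) z = n * polg g x z := by
  induction n with
  | zero => simpa using hq.polg_zero_left z
  | succ k ih =>
      rw [succ_nsmul, hq.polg_add_left (hq.nsmul_mem hx k) hx hz, ih]
      push_cast; ring

lemma polg_self {x : G} (hx : x ∈ S) : polg g x x = g x := by
  have h := hq.par x hx x hx
  have h2 : g (x - x) = 0 := by rw [sub_self]; exact hq.g_zero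
  unfold polg; rw [h2] at h; linarith

lemma g_nsmul {x : G} (hx : x ∈ S) (n : ℕ) : g (n • x) = (n:ℝ)^2 * g x := by
  induction n with
  | zero => simpa using hq.g_zero
  | succ k ih =>
      rw [succ_nsmul, g_expand g, ih, polg_comm g (k • x) x,
        polg_comm g x (k • x), hq.polg_nsmul_left hx hx k, hq.polg_self hx]
      push_cast; ring

lemma zsmul_mem {x : G} (hx : x ∈ S) (n : ℤ) : (n • x) ∈ S := by
  rcases Int.natAbs_eq n with h | h
  · rw [h]; rw [natCast_zsmul]; exact hq.nsmul_mem hx _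
  · rw [h, neg_zsmul, natCast_zsmul]; exact hq.neg_mem (hq.nsmul_mem hx _)

lemma g_nonneg_combo (hnn : ∀ x ∈ S, 0 ≤ g x) {x y : G} (hx : x ∈ S) (hy : y ∈ S)
    (m n : ℕ) :
    0 ≤ (m:ℝ)^2 * g x + 2 * m * n * polg g x y + (n:ℝ)^2 * g y := by
  have hmem : (m • x + n • y) ∈ S := hq.add_mem _ (hq.nsmul_mem hx m) _ (hq.nsmul_mem hy n)
  have h := hnn _ hmem
  rw [g_expand g] at h
  rw [hq.g_nsmul hx, hq.g_nsmul hy] at h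
  rw [hq.polg_nsmul_left hx (hq.nsmul_mem hy n) m] at h
  rw [polg_comm g x (n • y), hq.polg_nsmul_left hy hx n, polg_comm g y x] at h
  linarith

/-- Cauchy-Schwarz for a nonnegative quadratic functional on `S`. -/
lemma cauchy_schwarz (hnn : ∀ x ∈ S, 0 ≤ g x) {x y : G} (hx : x ∈ S) (hy : y ∈ S) :
    (polg g x y)^2 ≤ g x * g y := by
  set p := polg g x y with hp
  have habs : ∀ m n : ℕ, 2*(m:ℝ)*n*|p| ≤ (m:ℝ)^2 * g x + (n:ℝ)^2 * g y := by
    intro m n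
    have h1 := hq.g_nonneg_combo hnn hx hy m n
    have h2 := hq.g_nonneg_combo hnn hx (hq.neg_mem hy) m n
    have hpn : polg g x (-y) = -p := by
      rw [polg_comm g x (-y), hq.polg_neg_left hy hx, polg_comm g y x]
    rw [hpn, hq.g_even hy] at h2
    rcases abs_cases p with ⟨h, _⟩ | ⟨h, _⟩ <;> rw [h] <;> linarith
  have hratkey : ∀ r : ℚ, 0 ≤ r → 2*(r:ℝ)*|p| ≤ (r:ℝ)^2 * g x + g y := by
    intro r hr
    have hnum : ((r.num.toNat : ℝ)) = (r:ℝ) * (r.den:ℝ) := by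
      have h1 : (r.num.toNat : ℤ) = r.num := Int.toNat_of_nonneg (Rat.num_nonneg.mpr hr)
      have hd : ((r.den:ℝ)) ≠ 0 := by positivity
      have h2 : ((r.num : ℝ)) = (r:ℝ) * (r.den:ℝ) := by
        rw [Rat.cast_def]; field_simp
      have h3 : ((r.num.toNat : ℝ)) = ((r.num : ℝ)) := by exact_mod_cast congrArg (Int.cast : ℤ → ℝ) h1
      rw [h3, h2]
    have h := habs r.num.toNat r.den
    rw [hnum] at h
    have hden : (0:ℝ) < (r.den : ℝ) := by positivity
    have hden2 : (0:ℝ) < ((r.den:ℝ))^2 := by positivity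
    have he1 : 2*((r:ℝ) * (r.den:ℝ))*(r.den:ℝ)*|p| = ((r.den:ℝ))^2 * (2*(r:ℝ)*|p|) := by ring
    have he2 : ((r:ℝ) * (r.den:ℝ))^2 * g x + ((r.den:ℝ))^2 * g y
        = ((r.den:ℝ))^2 * ((r:ℝ)^2 * g x + g y) := by ring
    rw [he1, he2] at h
    exact le_of_mul_le_mul_left h hden2
  have key : ∀ t : ℝ, 0 ≤ t → 2*t*|p| ≤ t^2 * g x + g y := by
    intro t ht
    -- rational sequence decreasing to t
    have hex : ∀ k : ℕ, ∃ r : ℚ, t < (r:ℝ) ∧ (r:ℝ) < t + 1/(k+1) := by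
      intro k
      have : t < t + 1/(k+1) := by
        have : (0:ℝ) < 1/(k+1) := by positivity
        linarith
      exact_mod_cast exists_rat_btwn this
    choose r hr1 hr2 using hex
    have hrt : Filter.Tendsto (fun k => ((r k : ℝ))) atTop (nhds t) := by
      have hlow : Filter.Tendsto (fun _ : ℕ => t) atTop (nhds t) := tendsto_const_nhds
      have hup : Filter.Tendsto (fun k : ℕ => t + 1/(k+1)) atTop (nhds (t + 0)) :=
        tendsto_const_nhds.add tendsto_one_div_add_atTop_nhds_zero_nat
      rw [add_zero] at hup
      exact tendsto_of_tendsto_of_tendsto_of_le_of_le hlow hup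
        (fun k => le_of_lt (hr1 k)) (fun k => le_of_lt (hr2 k))
    have hlim : Filter.Tendsto
        (fun k => (((r k):ℝ))^2 * g x + g y - 2*((r k):ℝ)*|p|) atTop
        (nhds (t^2 * g x + g y - 2*t*|p|)) := by
      have h1 : Filter.Tendsto (fun k => (((r k):ℝ))^2) atTop (nhds (t^2)) := hrt.pow 2
      exact ((h1.mul_const (g x)).add_const (g y)).sub ((hrt.const_mul 2).mul_const |p|)
    have hge : 0 ≤ t^2 * g x + g y - 2*t*|p| := by
      refine ge_of_tendsto' hlim (fun k => ?_)
      have := hratkey (r k) (by exact_mod_cast le_of_lt (lt_of_le_of_lt ht (hr1 k)))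
      linarith
    linarith
  rcases le_or_gt (g x) 0 with hgx | hgx
  · have hgx0 : g x = 0 := le_antisymm hgx (hnn x hx)
    have hp0 : |p| = 0 := by
      by_contra hne
      have hpos : 0 < |p| := lt_of_le_of_ne (abs_nonneg _) (Ne.symm hne)
      have hgy := hnn y hy
      have hk := key ((g y + 1) / (2 * |p|)) (le_of_lt (div_pos (by linarith) (by positivity)))
      rw [hgx0] at hk
      have h2 : 2 * ((g y + 1) / (2 * |p|)) * |p| = g y + 1 := by
        field_simp
      nlinarith
    have hp00 : p = 0 := abs_eq_zero.mp hp0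
    rw [hp00, hgx0]
    simpa using mul_nonneg (le_refl (0:ℝ)) (hnn y hy)
  · have hk := key (|p| / g x) (by positivity)
    have ht : |p| / g x * g x = |p| := div_mul_cancel₀ _ (ne_of_gt hgx)
    have hsq : p^2 = |p|^2 := (sq_abs p).symm
    nlinarith [sq_nonneg (|p| / g x), abs_nonneg p]

end IsQuad

section Hump
variable {G : Type*} [AddCommGroup G]

lemma humpCore {S : Set G} {gN f : G → ℝ} (hqN : IsQuad S gN)
    (hNnn : ∀ x ∈ S, 0 ≤ gN x)
    (hf : ∀ x ∈ S, ∀ y ∈ S, f (x + y) = f x + f y)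
    (K B δ : ℝ) (hK : 0 ≤ K) (hB : 0 ≤ B) (hδ : 0 < δ)
    (hfb : ∀ x ∈ S, |f x| ≤ K * Real.sqrt (gN x))
    (w : ℕ → G) (hwS : ∀ n, w n ∈ S) (hwB : ∀ n, gN (w n) ≤ B)
    (hpol : ∀ z ∈ S, Tendsto (fun n => polg gN z (w n)) atTop (nhds 0))
    (hlow : ∀ n, δ ≤ f (w n)) : False := by
  have hf0 : f 0 = 0 := by
    have := hf 0 hqN.zero_mem 0 hqN.zero_mem
    simp at this
    linarith
  set A := B + 2 with hA
  have hApos : 0 < A := by simp [hA]; linarith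
  have aux : ∀ k : ℕ, ∃ z ∈ S, gN z ≤ k * A ∧ k * δ ≤ f z := by
    intro k
    induction k with
    | zero =>
        refine ⟨0, hqN.zero_mem, ?_, ?_⟩ <;> simp [hqN.g_zero, hf0]
    | succ k ih =>
        obtain ⟨z, hz, hNz, hfz⟩ := ih
        have habs : Tendsto (fun n => |polg gN z (w n)|) atTop (nhds 0) := by
          simpa using (hpol z hz).abs
        have hev : ∀ᶠ n in atTop, |polg gN z (w n)| < 1 :=
          habs.eventually_lt_const one_pos
        obtain ⟨n, hn⟩ := hev.exists
        refine ⟨z + w n, hqN.add_mem z hz (w n) (hwS n), ?_, ?_⟩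
        · rw [g_expand gN]
          have h1 := hwB n
          have h2 := abs_lt.mp hn
          push_cast
          nlinarith
        · rw [hf z hz (w n) (hwS n)]
          have := hlow n
          push_cast
          linarith
  set k : ℕ := ⌈K^2 * A / δ^2⌉₊ + 1 with hk
  obtain ⟨z, hz, hNz, hfz⟩ := aux k
  have hkpos : (0:ℝ) < k := by positivity
  have h1 : (k:ℝ) * δ ≤ K * Real.sqrt ((k:ℝ) * A) := by
    calc (k:ℝ) * δ ≤ f z := hfz
    _ ≤ |f z| := le_abs_self _
    _ ≤ K * Real.sqrt (gN z) := hfb z hz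
    _ ≤ K * Real.sqrt ((k:ℝ) * A) := by
        exact mul_le_mul_of_nonneg_left (Real.sqrt_le_sqrt hNz) hK
  have h2 : ((k:ℝ) * δ)^2 ≤ (K * Real.sqrt ((k:ℝ) * A))^2 := by
    have hkd : 0 ≤ (k:ℝ) * δ := by positivity
    exact pow_le_pow_left₀ hkd h1 2
  have h2b : (K * Real.sqrt ((k:ℝ) * A))^2 = K^2 * ((k:ℝ) * A) := by
    rw [mul_pow, Real.sq_sqrt (by positivity)]
  rw [h2b] at h2
  -- h2 : k^2 δ^2 ≤ K^2 (k A)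
  have h3 : (k:ℝ) * δ^2 ≤ K^2 * A := by
    have := mul_le_mul_of_nonneg_left h2 (le_of_lt (inv_pos.mpr hkpos))
    calc (k:ℝ) * δ^2 = ((k:ℝ))⁻¹ * (((k:ℝ)*δ)^2) := by field_simp
    _ ≤ ((k:ℝ))⁻¹ * (K^2 * ((k:ℝ) * A)) := this
    _ = K^2 * A := by field_simp
  have h4 : (k:ℝ) ≤ K^2 * A / δ^2 := by
    rw [le_div_iff₀ (by positivity)]
    linarith
  have h5 : K^2 * A / δ^2 ≤ (⌈K^2 * A / δ^2⌉₊ : ℝ) := Nat.le_ceil _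
  have h6 : (k:ℝ) = (⌈K^2 * A / δ^2⌉₊ : ℝ) + 1 := by rw [hk]; push_cast; ring
  linarith

lemma humpTendsto {S : Set G} {gN f : G → ℝ} (hqN : IsQuad S gN)
    (hNnn : ∀ x ∈ S, 0 ≤ gN x)
    (hf : ∀ x ∈ S, ∀ y ∈ S, f (x + y) = f x + f y)
    (K B : ℝ) (hK : 0 ≤ K) (hB : 0 ≤ B)
    (hfb : ∀ x ∈ S, |f x| ≤ K * Real.sqrt (gN x))
    (w : ℕ → G) (hwS : ∀ n, w n ∈ S) (hwB : ∀ n, gN (w n) ≤ B)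
    (hpol : ∀ z ∈ S, Tendsto (fun n => polg gN z (w n)) atTop (nhds 0)) :
    Tendsto (fun n => f (w n)) atTop (nhds 0) := by
  have hfneg : ∀ x ∈ S, f (-x) = - f x := by
    intro x hx
    have h1 := hf x hx (-x) (hqN.neg_mem hx)
    rw [add_neg_cancel] at h1
    have hf0 : f 0 = 0 := by
      have := hf 0 hqN.zero_mem 0 hqN.zero_mem
      simp at this
      linarith
    linarith
  by_contra hcon
  rw [Metric.tendsto_atTop] at hcon
  push_neg at hcon
  obtain ⟨δ, hδ, hfreq'⟩ := hcon
  have hfreq : ∃ᶠ n in atTop, δ ≤ |f (w n)| := by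
    rw [Filter.frequently_atTop]
    intro N
    obtain ⟨n, hnN, hn⟩ := hfreq' N
    refine ⟨n, hnN, ?_⟩
    rwa [Real.dist_eq, sub_zero] at hn
  have hsplit : (∃ᶠ n in atTop, δ ≤ f (w n)) ∨ (∃ᶠ n in atTop, f (w n) ≤ -δ) := by
    rw [← Filter.frequently_or_distrib]
    refine hfreq.mono (fun n hn => ?_)
    rcases abs_cases (f (w n)) with ⟨h, _⟩ | ⟨h, _⟩
    · left; linarith
    · right; linarith
  rcases hsplit with hpos | hneg
  · obtain ⟨φ, hφ, hφlow⟩ := extraction_of_frequently_atTop hpos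
    exact humpCore hqN hNnn hf K B δ hK hB hδ hfb (fun n => w (φ n))
      (fun n => hwS (φ n)) (fun n => hwB (φ n))
      (fun z hz => (hpol z hz).comp hφ.tendsto_atTop)
      hφlow
  · obtain ⟨φ, hφ, hφlow⟩ := extraction_of_frequently_atTop hneg
    refine humpCore hqN hNnn hf K B δ hK hB hδ hfb (fun n => -(w (φ n)))
      (fun n => hqN.neg_mem (hwS (φ n)))
      (fun n => by rw [hqN.g_even (hwS (φ n))]; exact hwB (φ n))
      (fun z hz => ?_) (fun n => ?_)
    · have heq : ∀ n : ℕ, polg gN z (-(w (φ n))) = - polg gN z (w (φ n)) := by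
        intro n
        rw [polg_comm gN z, hqN.polg_neg_left (hwS (φ n)) hz, polg_comm gN _ z]
      have := ((hpol z hz).comp hφ.tendsto_atTop).neg
      rw [neg_zero] at this
      exact this.congr (fun n => (heq n).symm)
    · rw [hfneg _ (hwS (φ n))]
      linarith [hφlow n]

end Hump
end Generic


section Specific
open ENNReal

variable {H : Type*} [NormedAddCommGroup H] [InnerProductSpace ℂ H]

/-- The key weak-convergence property of a lower semicontinuous quadratic functional:
if `w n → 0` in `H` with bounded form values, then form-pairings with any fixed
element of the domain tend to `0`. -/
lemma lsc_pairing (Q₀ : H → ℝ≥0∞)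
    (hclosed : LowerSemicontinuous Q₀)
    (hqP : IsQuad {u : H | Q₀ u < ⊤} (fun x => (Q₀ x).toReal))
    {w : ℕ → H} (hwS : ∀ n, Q₀ (w n) < ⊤) (hw0 : Filter.Tendsto w Filter.atTop (nhds 0))
    {M : ℝ} (hM0 : 0 ≤ M) (hM : ∀ n, (Q₀ (w n)).toReal ≤ M)
    {d : H} (hd : Q₀ d < ⊤) :
    Filter.Tendsto (fun n => polg (fun x => (Q₀ x).toReal) d (w n)) Filter.atTop (nhds 0) := by
  set S : Set H := {u : H | Q₀ u < ⊤} with hS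
  set P : H → ℝ := fun x => (Q₀ x).toReal with hP
  have hPnn : ∀ x, 0 ≤ P x := fun x => ENNReal.toReal_nonneg
  -- one-sided estimate
  have onesided : ∀ d' : H, d' ∈ S → ∀ ε : ℝ, 0 < ε →
      ∀ᶠ n in Filter.atTop, -ε ≤ polg P d' (w n) := by
    intro d' hd' ε hε
    set m : ℕ := max 1 ⌈M / ε⌉₊ with hm
    have hm1 : (1:ℝ) ≤ (m:ℝ) := by
      have : 1 ≤ m := le_max_left _ _
      exact_mod_cast this
    have hmpos : (0:ℝ) < (m:ℝ) := by linarith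
    have hm2 : M ≤ (m:ℝ) * ε := by
      have h1 : M / ε ≤ (⌈M / ε⌉₊ : ℝ) := Nat.le_ceil _
      have h2 : (⌈M / ε⌉₊ : ℝ) ≤ (m:ℝ) := by
        have : ⌈M / ε⌉₊ ≤ m := le_max_right _ _
        exact_mod_cast this
      have : M / ε ≤ (m:ℝ) := le_trans h1 h2
      calc M = (M / ε) * ε := by field_simp
      _ ≤ (m:ℝ) * ε := mul_le_mul_of_nonneg_right this (le_of_lt hε)
    have hmd : (m • d') ∈ S := hqP.nsmul_mem hd' m
    have hPmd : P (m • d') = (m:ℝ)^2 * P d' := hqP.g_nsmul hd' m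
    set θ : ℝ := (m:ℝ)^2 * P d' with hθ
    -- expansion of P (m•d' + w n)
    have hexp : ∀ n, P (m • d' + w n) = θ + 2 * ((m:ℝ) * polg P d' (w n)) + P (w n) := by
      intro n
      rw [g_expand P (m • d') (w n), hPmd, hqP.polg_nsmul_left hd' (hwS n) m]
    rcases le_or_gt θ ((m:ℝ) * ε) with hcase | hcase
    · -- trivial case: holds for every n
      refine Filter.Eventually.of_forall (fun n => ?_)
      have h1 : 0 ≤ P (m • d' + w n) := hPnn _
      have h2 := hexp n
      have h3 := hM n
      nlinarith [hPnn (w n)]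
    · -- LSC case
      have hθpos : 0 < θ := lt_trans (by positivity) hcase
      have hQmd : Q₀ (m • d') = ENNReal.ofReal θ := by
        rw [← hPmd]
        exact (ENNReal.ofReal_toReal (ne_of_lt hmd)).symm
      have hc' : ENNReal.ofReal (θ - (m:ℝ) * ε) < Q₀ (m • d') := by
        rw [hQmd]
        rw [ENNReal.ofReal_lt_ofReal_iff hθpos]
        nlinarith
      have hten : Filter.Tendsto (fun n => m • d' + w n) Filter.atTop (nhds (m • d')) := by
        have h := (tendsto_const_nhds (x := m • d') (f := (Filter.atTop : Filter ℕ))).add hw0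
        simpa using h
      have hev := hten.eventually (hclosed (m • d') _ hc')
      refine hev.mono (fun n hn => ?_)
      by_cases hfin : Q₀ (m • d' + w n) < ⊤
      · have htR : θ - (m:ℝ) * ε < P (m • d' + w n) := by
          have := (ENNReal.ofReal_lt_iff_lt_toReal (by nlinarith) (ne_of_lt hfin)).mp hn
          exact this
        have h2 := hexp n
        have h3 := hM n
        nlinarith
      · exfalso
        have : m • d' + w n ∈ S := hqP.add_mem _ hmd _ (hwS n)
        exact hfin this
  -- combine two sides
  rw [Metric.tendsto_atTop]
  intro ε hε
  have hhalf : 0 < ε / 2 := by linarith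
  have h1 := onesided d hd (ε/2) hhalf
  have h2 := onesided (-d) (hqP.neg_mem hd) (ε/2) hhalf
  have h2' : ∀ᶠ n in Filter.atTop, polg P d (w n) ≤ ε/2 := by
    refine h2.mono (fun n hn => ?_)
    rw [hqP.polg_neg_left hd (hwS n)] at hn
    linarith
  obtain ⟨N, hN⟩ := Filter.eventually_atTop.mp (h1.and h2')
  refine ⟨N, fun n hn => ?_⟩
  have := hN n hn
  rw [Real.dist_eq, sub_zero]
  rw [abs_lt]
  constructor <;> [linarith [this.1]; linarith [this.2]]

/-- pointwise decomposition of polarizations -/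
lemma polg_decomp {G : Type*} [AddCommGroup G] (g1 g2 : G → ℝ) (c1 c2 : ℝ) (x y : G) :
    polg (fun z => c1 * g1 z + c2 * g2 z) x y = c1 * polg g1 x y + c2 * polg g2 x y := by
  unfold polg; ring

/-- CS-derived bound on polarizations -/
lemma IsQuad.abs_polg_le {G : Type*} [AddCommGroup G] {S : Set G} {g : G → ℝ}
    (hq : IsQuad S g) (hnn : ∀ x ∈ S, 0 ≤ g x) {x y : G} (hx : x ∈ S) (hy : y ∈ S) :
    |polg g x y| ≤ Real.sqrt (g x) * Real.sqrt (g y) := by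
  have h1 := hq.cauchy_schwarz hnn hx hy
  have h2 : |polg g x y| = Real.sqrt ((polg g x y)^2) := (Real.sqrt_sq_eq_abs _).symm
  rw [h2, ← Real.sqrt_mul (hnn x hx)]
  exact Real.sqrt_le_sqrt h1

/-- main quantitative closedness statement -/
lemma key_closed (Q₀ : H → ℝ≥0∞) (q : H → ℝ) (a b : ℝ)
    (ha0 : 0 ≤ a) (ha1 : a < 1) (hb : 0 ≤ b)
    (hclosed : LowerSemicontinuous Q₀)
    (hqP : IsQuad {u : H | Q₀ u < ⊤} (fun x => (Q₀ x).toReal))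
    (hqq : IsQuad {u : H | Q₀ u < ⊤} q)
    (hbound : ∀ u : H, Q₀ u < ⊤ → |q u| ≤ a * (Q₀ u).toReal + b * ‖u‖ ^ 2)
    {u : H} (hu : Q₀ u < ⊤) {c : ℝ}
    (v : ℕ → H) (hvD : ∀ n, Q₀ (v n) < ⊤)
    (hvc : ∀ n, (Q₀ (v n)).toReal + q (v n) + b * ‖v n‖^2 ≤ c)
    (hvu : Filter.Tendsto v Filter.atTop (nhds u)) :
    (Q₀ u).toReal + q u + b * ‖u‖^2 ≤ c := by
  set S : Set H := {u : H | Q₀ u < ⊤} with hSdef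
  set P : H → ℝ := fun x => (Q₀ x).toReal with hPdef
  set nsq : H → ℝ := fun x => ‖x‖^2 with hnsqdef
  have hnsq_par : ∀ x y : H, nsq (x + y) + nsq (x - y) = 2 * nsq x + 2 * nsq y := by
    intro x y
    have hpl := parallelogram_law_with_norm ℂ x y
    simp only [hnsqdef]
    nlinarith [hpl]
  have hqh : IsQuad S nsq :=
    ⟨hqP.zero_mem, hqP.add_mem, hqP.sub_mem, fun x _ y _ => hnsq_par x y⟩
  have hPnn : ∀ x, 0 ≤ P x := fun x => ENNReal.toReal_nonneg
  have hnsqnn : ∀ x, 0 ≤ nsq x := fun x => by simp only [hnsqdef]; positivity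
  -- the full form T and the auxiliary nonneg forms
  set T : H → ℝ := fun x => P x + q x + b * nsq x with hTdef
  set rp : H → ℝ := fun x => a * P x + b * nsq x + q x with hrpdef
  set gN : H → ℝ := fun x => P x + nsq x with hgNdef
  have hqT : IsQuad S T := (hqP.addQ hqq).addQ (hqh.smulQ b)
  have hqrp : IsQuad S rp := ((hqP.smulQ a).addQ (hqh.smulQ b)).addQ hqq
  have hqgN : IsQuad S gN := hqP.addQ hqh
  have hrpnn : ∀ x ∈ S, 0 ≤ rp x := by
    intro x hx
    have := hbound x hx
    have := abs_le.mp this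
    simp only [hrpdef]
    simp only [hPdef, hnsqdef] at *
    linarith [this.2]
  have hTlow : ∀ x ∈ S, (1 - a) * P x ≤ T x := by
    intro x hx
    have h := abs_le.mp (hbound x hx)
    simp only [hTdef, hPdef, hnsqdef] at *
    nlinarith [h.1, hnsqnn x]
  have hTnn : ∀ x ∈ S, 0 ≤ T x := by
    intro x hx
    have h1 := hTlow x hx
    have h2 := hPnn x
    nlinarith
  have hgNnn : ∀ x ∈ S, 0 ≤ gN x := by
    intro x _
    simp only [hgNdef]
    have := hPnn x; have := hnsqnn x; linarith
  -- the difference sequence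
  set w : ℕ → H := fun n => v n - u with hwdef
  have hwS : ∀ n, w n ∈ S := fun n => hqP.sub_mem _ (hvD n) _ hu
  have hw0 : Filter.Tendsto w Filter.atTop (nhds 0) := by
    have := hvu.sub_const u
    simpa [hwdef, sub_self] using this
  have hvne : ∀ n, v n = u + w n := fun n => by simp [hwdef]
  have huS : u ∈ S := hu
  have hc0 : 0 ≤ c := le_trans (hTnn (v 0) (hvD 0)) (hvc 0)
  -- bound on T (w n) and P (w n)
  have hTu : 0 ≤ T u := hTnn u huS
  have hTw : ∀ n, T (w n) ≤ 2 * c + 2 * T u := by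
    intro n
    have hpar := hqT.par (v n) (hvD n) u huS
    have h0 : 0 ≤ T (v n + u) := hTnn _ (hqT.add_mem _ (hvD n) _ huS)
    have h1 := hvc n
    have h1' : T (v n) ≤ c := by simp only [hTdef, hPdef, hnsqdef]; exact h1
    have : T (v n - u) ≤ 2 * c + 2 * T u := by linarith
    simpa [hwdef] using this
  set M : ℝ := (2 * c + 2 * T u) / (1 - a) with hMdef
  have hM0 : 0 ≤ M := by
    have : 0 < 1 - a := by linarith
    positivity
  have hPw : ∀ n, P (w n) ≤ M := by
    intro n
    have h1 := hTlow (w n) (hwS n)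
    have h2 := hTw n
    rw [hMdef, le_div_iff₀ (by linarith : (0:ℝ) < 1 - a)]
    nlinarith
  -- norm bound
  have hnb : ∃ B ≥ 0, ∀ n, nsq (w n) ≤ B := by
    have hbdd : BddAbove (Set.range (fun n => ‖w n‖)) := hw0.norm.bddAbove_range
    obtain ⟨Bn, hBn⟩ := hbdd
    refine ⟨Bn^2, by positivity, fun n => ?_⟩
    have h1 : ‖w n‖ ≤ Bn := hBn ⟨n, rfl⟩
    have h2 : 0 ≤ ‖w n‖ := norm_nonneg _
    simp only [hnsqdef]
    nlinarith
  obtain ⟨Bn, hBn0, hBn⟩ := hnb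
  have hgNw : ∀ n, gN (w n) ≤ M + Bn := by
    intro n
    simp only [hgNdef]
    have := hPw n; have := hBn n; linarith
  -- pairing convergence for P
  have hpolP : ∀ d ∈ S, Filter.Tendsto (fun n => polg P d (w n)) Filter.atTop (nhds 0) := by
    intro d hd
    exact lsc_pairing Q₀ hclosed hqP (fun n => hwS n) hw0 hM0 (fun n => hPw n) hd
  -- pairing convergence for nsq
  have hpolh : ∀ d : H, Filter.Tendsto (fun n => polg nsq d (w n)) Filter.atTop (nhds 0) := by
    intro d
    have h1 : Filter.Tendsto (fun n => ‖d + w n‖^2) Filter.atTop (nhds (‖d‖^2)) := by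
      have hadd : Filter.Tendsto (fun n => d + w n) Filter.atTop (nhds (d + 0)) :=
        (tendsto_const_nhds (x := d) (f := (Filter.atTop : Filter ℕ))).add hw0
      rw [add_zero] at hadd
      exact (hadd.norm).pow 2
    have h2 : Filter.Tendsto (fun n => ‖w n‖^2) Filter.atTop (nhds 0) := by
      have := (hw0.norm).pow 2
      simpa using this
    have h3 := ((h1.sub_const (‖d‖^2)).sub h2).div_const 2
    have heq : ∀ n, (‖d + w n‖^2 - ‖d‖^2 - ‖w n‖^2) / 2 = polg nsq d (w n) := by
      intro n; simp only [polg, hnsqdef]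
    have h4 : Filter.Tendsto (fun n => polg nsq d (w n)) Filter.atTop
        (nhds ((‖d‖^2 - ‖d‖^2 - 0) / 2)) := h3.congr heq
    simpa using h4
  -- pairing convergence for gN (hump hypothesis)
  have hpolgN : ∀ z ∈ S, Filter.Tendsto (fun n => polg gN z (w n)) Filter.atTop (nhds 0) := by
    intro z hz
    have heq : ∀ n, polg gN z (w n) = polg P z (w n) + polg nsq z (w n) := by
      intro n; simp only [polg, hgNdef]; ring
    have := (hpolP z hz).add (hpolh z)
    rw [add_zero] at this
    exact this.congr (fun n => (heq n).symm)
  -- pairing convergence for q via the gliding hump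
  have hpolq : Filter.Tendsto (fun n => polg q u (w n)) Filter.atTop (nhds 0) := by
    set f : H → ℝ := fun x => polg q u x with hfdef
    have hfadd : ∀ x ∈ S, ∀ y ∈ S, f (x + y) = f x + f y := by
      intro x hx y hy
      simp only [hfdef]
      rw [polg_comm q u (x + y), hqq.polg_add_left hx hy huS,
        polg_comm q x u, polg_comm q y u]
    set K : ℝ := Real.sqrt (rp u) * Real.sqrt (2*a + 2*b) + a * Real.sqrt (P u)
        + b * Real.sqrt (nsq u) with hKdef
    have hK0 : 0 ≤ K := by
      simp only [hKdef]
      positivity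
    have hfb : ∀ x ∈ S, |f x| ≤ K * Real.sqrt (gN x) := by
      intro x hx
      -- decomposition : q = rp - a P - b nsq
      have hdec : f x = polg rp u x - a * polg P u x - b * polg nsq u x := by
        simp only [hfdef, polg, hrpdef]; ring
      have h1 : |polg rp u x| ≤ Real.sqrt (rp u) * Real.sqrt (rp x) :=
        hqrp.abs_polg_le hrpnn huS hx
      have h2 : |polg P u x| ≤ Real.sqrt (P u) * Real.sqrt (P x) :=
        hqP.abs_polg_le (fun z _ => hPnn z) huS hx
      have h3 : |polg nsq u x| ≤ Real.sqrt (nsq u) * Real.sqrt (nsq x) :=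
        hqh.abs_polg_le (fun z _ => hnsqnn z) huS hx
      -- rp x ≤ (2a+2b) gN x
      have h4 : rp x ≤ (2*a + 2*b) * gN x := by
        have hb1 := abs_le.mp (hbound x hx)
        simp only [hrpdef, hgNdef, hPdef, hnsqdef] at *
        nlinarith [hPnn x, hnsqnn x, hb1.2]
      have h5 : Real.sqrt (rp x) ≤ Real.sqrt (2*a + 2*b) * Real.sqrt (gN x) := by
        rw [← Real.sqrt_mul (by linarith)]
        exact Real.sqrt_le_sqrt h4
      have h6 : Real.sqrt (P x) ≤ Real.sqrt (gN x) := by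
        apply Real.sqrt_le_sqrt
        simp only [hgNdef]
        linarith [hnsqnn x]
      have h7 : Real.sqrt (nsq x) ≤ Real.sqrt (gN x) := by
        apply Real.sqrt_le_sqrt
        simp only [hgNdef]
        linarith [hPnn x]
      have h8 : |f x| ≤ |polg rp u x| + a * |polg P u x| + b * |polg nsq u x| := by
        rw [hdec]
        have t1 : |polg rp u x - a * polg P u x - b * polg nsq u x|
            ≤ |polg rp u x - a * polg P u x| + |b * polg nsq u x| := abs_sub _ _
        have t2 : |polg rp u x - a * polg P u x|
            ≤ |polg rp u x| + |a * polg P u x| := abs_sub _ _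
        rw [abs_mul, abs_of_nonneg ha0] at t2
        rw [abs_mul, abs_of_nonneg hb] at t1
        linarith
      have hsq1 : 0 ≤ Real.sqrt (rp u) := Real.sqrt_nonneg _
      have hsq2 : 0 ≤ Real.sqrt (P u) := Real.sqrt_nonneg _
      have hsq3 : 0 ≤ Real.sqrt (nsq u) := Real.sqrt_nonneg _
      have hsq4 : 0 ≤ Real.sqrt (gN x) := Real.sqrt_nonneg _
      calc |f x| ≤ |polg rp u x| + a * |polg P u x| + b * |polg nsq u x| := h8
      _ ≤ Real.sqrt (rp u) * (Real.sqrt (2*a+2*b) * Real.sqrt (gN x))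
          + a * (Real.sqrt (P u) * Real.sqrt (gN x))
          + b * (Real.sqrt (nsq u) * Real.sqrt (gN x)) := by
          have e1 : |polg rp u x| ≤ Real.sqrt (rp u) * (Real.sqrt (2*a+2*b) * Real.sqrt (gN x)) := by
            calc |polg rp u x| ≤ Real.sqrt (rp u) * Real.sqrt (rp x) := h1
            _ ≤ Real.sqrt (rp u) * (Real.sqrt (2*a+2*b) * Real.sqrt (gN x)) :=
                mul_le_mul_of_nonneg_left h5 hsq1
          have e2 : a * |polg P u x| ≤ a * (Real.sqrt (P u) * Real.sqrt (gN x)) := by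
            apply mul_le_mul_of_nonneg_left _ ha0
            calc |polg P u x| ≤ Real.sqrt (P u) * Real.sqrt (P x) := h2
            _ ≤ Real.sqrt (P u) * Real.sqrt (gN x) := mul_le_mul_of_nonneg_left h6 hsq2
          have e3 : b * |polg nsq u x| ≤ b * (Real.sqrt (nsq u) * Real.sqrt (gN x)) := by
            apply mul_le_mul_of_nonneg_left _ hb
            calc |polg nsq u x| ≤ Real.sqrt (nsq u) * Real.sqrt (nsq x) := h3
            _ ≤ Real.sqrt (nsq u) * Real.sqrt (gN x) := mul_le_mul_of_nonneg_left h7 hsq3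
          linarith
      _ = K * Real.sqrt (gN x) := by simp only [hKdef]; ring
    exact humpTendsto hqgN hgNnn hfadd K (M + Bn) hK0 (by linarith) hfb w hwS hgNw hpolgN
  -- combine : polg T u (w n) → 0
  have hpolT : Filter.Tendsto (fun n => polg T u (w n)) Filter.atTop (nhds 0) := by
    have heq : ∀ n, polg T u (w n) = polg P u (w n) + polg q u (w n) + b * polg nsq u (w n) := by
      intro n; simp only [polg, hTdef]; ring
    have h1 := ((hpolP u huS).add hpolq).add ((hpolh u).const_mul b)
    simp only [add_zero, mul_zero] at h1
    exact h1.congr (fun n => (heq n).symm)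
  -- conclude
  have hfinal : ∀ ε : ℝ, 0 < ε → T u ≤ c + ε := by
    intro ε hε
    have hev : ∀ᶠ n in Filter.atTop, |polg T u (w n)| < ε / 2 := by
      have := hpolT.abs
      simp only [abs_zero] at this
      exact this.eventually_lt_const (by linarith)
    obtain ⟨n, hn⟩ := hev.exists
    have hexp : T (v n) = T u + 2 * polg T u (w n) + T (w n) := by
      rw [hvne n]; exact g_expand T u (w n)
    have h1 : T (v n) ≤ c := by simp only [hTdef, hPdef, hnsqdef]; exact hvc n
    have h2 : 0 ≤ T (w n) := hTnn _ (hwS n)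
    have h3 := abs_lt.mp hn
    linarith [h3.1]
  obtain ⟨tu, htu⟩ : ∃ t : ℝ, T u = t := ⟨T u, rfl⟩
  have hfinal' : ∀ ε : ℝ, 0 < ε → tu ≤ c + ε := by
    intro ε hε; rw [← htu]; exact hfinal ε hε
  have htc : tu ≤ c := by
    by_contra hcon
    push_neg at hcon
    have h := hfinal' ((tu - c)/2) (by linarith)
    linarith
  have : T u ≤ c := htu ▸ htc
  simpa [hTdef, hPdef, hnsqdef] using this

/-- build the `IsQuad` structures from the raw ENNReal hypotheses -/
lemma build_quads (Q₀ : H → ℝ≥0∞) (q : H → ℝ)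
    (hne : ∃ x : H, Q₀ x < ⊤)
    (hQ₀par : ∀ u v : H, Q₀ u < ⊤ → Q₀ v < ⊤ →
      Q₀ (u + v) + Q₀ (u - v) = 2 * Q₀ u + 2 * Q₀ v)
    (hqpar : ∀ u v : H, Q₀ u < ⊤ → Q₀ v < ⊤ →
      q (u + v) + q (u - v) = 2 * q u + 2 * q v) :
    IsQuad {u : H | Q₀ u < ⊤} (fun x => (Q₀ x).toReal) ∧ IsQuad {u : H | Q₀ u < ⊤} q := by
  have hboth : ∀ x y : H, Q₀ x < ⊤ → Q₀ y < ⊤ → Q₀ (x + y) < ⊤ ∧ Q₀ (x - y) < ⊤ := by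
    intro x y hx hy
    have h := hQ₀par x y hx hy
    have hr : 2 * Q₀ x + 2 * Q₀ y < ⊤ :=
      ENNReal.add_lt_top.mpr ⟨ENNReal.mul_lt_top (by simp) hx, ENNReal.mul_lt_top (by simp) hy⟩
    rw [← h] at hr
    exact ENNReal.add_lt_top.mp hr
  have hadd : ∀ x ∈ {u : H | Q₀ u < ⊤}, ∀ y ∈ {u : H | Q₀ u < ⊤}, x + y ∈ {u : H | Q₀ u < ⊤} :=
    fun x hx y hy => (hboth x y hx hy).1
  have hsub : ∀ x ∈ {u : H | Q₀ u < ⊤}, ∀ y ∈ {u : H | Q₀ u < ⊤}, x - y ∈ {u : H | Q₀ u < ⊤} :=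
    fun x hx y hy => (hboth x y hx hy).2
  have h0 : (0:H) ∈ {u : H | Q₀ u < ⊤} := by
    obtain ⟨x, hx⟩ := hne
    have := (hboth x x hx hx).2
    simpa using this
  have hParP : ∀ x ∈ {u : H | Q₀ u < ⊤}, ∀ y ∈ {u : H | Q₀ u < ⊤},
      (Q₀ (x+y)).toReal + (Q₀ (x-y)).toReal = 2 * (Q₀ x).toReal + 2 * (Q₀ y).toReal := by
    intro x hx y hy
    have h := hQ₀par x y hx hy
    have hb := hboth x y hx hy
    have h1 : (Q₀ (x+y) + Q₀ (x-y)).toReal = (2 * Q₀ x + 2 * Q₀ y).toReal := by rw [h]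
    rw [ENNReal.toReal_add (ne_of_lt hb.1) (ne_of_lt hb.2)] at h1
    rw [ENNReal.toReal_add (ne_of_lt (ENNReal.mul_lt_top (by simp) hx))
      (ne_of_lt (ENNReal.mul_lt_top (by simp) hy))] at h1
    rw [ENNReal.toReal_mul, ENNReal.toReal_mul] at h1
    simpa using h1
  exact ⟨⟨h0, hadd, hsub, hParP⟩, ⟨h0, hadd, hsub, fun x hx y hy => hqpar x y hx hy⟩⟩


end Specific

/-- KLMN-type stability, Kato VI.1.33. A closed nonnegative densely defined
form `Q₀` is encoded as a lower semicontinuous functional `Q₀ : H → ℝ≥0∞` (value `∞` outside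
the form domain; for nonnegative forms, closedness is equivalent to lower semicontinuity)
satisfying the parallelogram law on its domain. If the symmetric form `q` satisfies
`|q(u)| ≤ a·Q₀(u) + b·‖u‖²` on `D(Q₀)` with `a ∈ [0,1)`, `b ≥ 0`, then the form sum
`Q₀ + q` with domain `D(Q₀)` is densely defined, semibounded from below by `-b`, and closed
(i.e. the shifted form functional is again lower semicontinuous). -/
theorem klmn_form_sum_closed
    {H : Type*} [NormedAddCommGroup H] [InnerProductSpace ℂ H]
    (Q₀ : H → ℝ≥0∞) (q : H → ℝ) (a b : ℝ)
    (ha0 : 0 ≤ a) (ha1 : a < 1) (hb : 0 ≤ b)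
    (hdense : Dense {u : H | Q₀ u < ⊤})
    (hclosed : LowerSemicontinuous Q₀)
    (hQ₀par : ∀ u v : H, Q₀ u < ⊤ → Q₀ v < ⊤ →
      Q₀ (u + v) + Q₀ (u - v) = 2 * Q₀ u + 2 * Q₀ v)
    (hqpar : ∀ u v : H, Q₀ u < ⊤ → Q₀ v < ⊤ →
      q (u + v) + q (u - v) = 2 * q u + 2 * q v)
    (hbound : ∀ u : H, Q₀ u < ⊤ → |q u| ≤ a * (Q₀ u).toReal + b * ‖u‖ ^ 2) :
    Dense {u : H | Q₀ u < ⊤} ∧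
    (∀ u : H, Q₀ u < ⊤ → -(b * ‖u‖ ^ 2) ≤ (Q₀ u).toReal + q u) ∧
    LowerSemicontinuous (fun u : H =>
      if Q₀ u < ⊤ then ENNReal.ofReal ((Q₀ u).toReal + q u + b * ‖u‖ ^ 2) else ⊤) := by
  have hne : ∃ x : H, Q₀ x < ⊤ := by
    obtain ⟨x, hx⟩ := hdense.nonempty
    exact ⟨x, hx⟩
  obtain ⟨hqP, hqq⟩ := build_quads Q₀ q hne hQ₀par hqpar
  -- lower bound fact
  have hlow : ∀ u : H, Q₀ u < ⊤ →
      (1 - a) * (Q₀ u).toReal ≤ (Q₀ u).toReal + q u + b * ‖u‖ ^ 2 := by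
    intro u hu
    have h := (abs_le.mp (hbound u hu)).1
    nlinarith [ENNReal.toReal_nonneg (a := Q₀ u), sq_nonneg ‖u‖, norm_nonneg u]
  refine ⟨hdense, ?_, ?_⟩
  · intro u hu
    have h := (abs_le.mp (hbound u hu)).1
    have h2 : a * (Q₀ u).toReal ≤ (Q₀ u).toReal := by
      have := ENNReal.toReal_nonneg (a := Q₀ u)
      nlinarith
    linarith
  · -- lower semicontinuity
    intro u y hy
    beta_reduce at hy ⊢
    by_cases hu : Q₀ u < ⊤
    · -- u in the domain
      rw [if_pos hu] at hy
      have hytop : y ≠ ⊤ := ne_top_of_lt (lt_of_lt_of_le hy le_top)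
      have hyR : y.toReal < (Q₀ u).toReal + q u + b * ‖u‖ ^ 2 :=
        (ENNReal.lt_ofReal_iff_toReal_lt hytop).mp hy
      by_contra hcon
      have hfreq : ∃ᶠ v in nhds u, ¬ y <
          (if Q₀ v < ⊤ then ENNReal.ofReal ((Q₀ v).toReal + q v + b * ‖v‖ ^ 2) else ⊤) :=
        Filter.not_eventually.mp hcon
      have hseq : ∀ k : ℕ, ∃ x : H, dist x u < 1/(k+1) ∧
          ¬ y < (if Q₀ x < ⊤ then ENNReal.ofReal ((Q₀ x).toReal + q x + b * ‖x‖ ^ 2) else ⊤) := by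
        intro k
        have hball : ∀ᶠ x in nhds u, x ∈ Metric.ball u (1/(k+1)) :=
          Filter.eventually_mem_set.mpr (Metric.ball_mem_nhds u (by positivity))
        obtain ⟨x, hx1, hx2⟩ := (hfreq.and_eventually hball).exists
        exact ⟨x, by simpa [Metric.mem_ball] using hx2, hx1⟩
      choose v hvdist hvF using hseq
      have hvu : Filter.Tendsto v Filter.atTop (nhds u) := by
        rw [tendsto_iff_dist_tendsto_zero]
        refine squeeze_zero (fun k => dist_nonneg) (fun k => le_of_lt (hvdist k)) ?_
        exact tendsto_one_div_add_atTop_nhds_zero_nat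
      have hvD : ∀ k, Q₀ (v k) < ⊤ := by
        intro k
        by_contra hvk
        have := hvF k
        rw [if_neg hvk] at this
        push_neg at this
        exact hytop (top_le_iff.mp this)
      have hvc : ∀ k, (Q₀ (v k)).toReal + q (v k) + b * ‖v k‖ ^ 2 ≤ y.toReal := by
        intro k
        have h := hvF k
        rw [if_pos (hvD k)] at h
        push_neg at h
        exact (ENNReal.ofReal_le_iff_le_toReal hytop).mp h
      have := key_closed Q₀ q a b ha0 ha1 hb hclosed hqP hqq hbound hu v hvD hvc hvu
      linarith
    · -- u outside the domain : the function is ⊤ there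
      rw [if_neg hu] at hy
      have hytop : y ≠ ⊤ := ne_of_lt hy
      set c1 : ℝ≥0∞ := ENNReal.ofReal (1 - a) with hc1def
      have hc10 : c1 ≠ 0 := by
        rw [hc1def]
        simp only [ne_eq, ENNReal.ofReal_eq_zero, not_le]
        linarith
      have hc1top : c1 ≠ ⊤ := ENNReal.ofReal_ne_top
      have hdiv : y / c1 < Q₀ u := by
        have h1 : y / c1 < ⊤ := ENNReal.div_lt_top hytop hc10
        have h2 : Q₀ u = ⊤ := by
          by_contra h
          exact hu (lt_top_iff_ne_top.mpr h)
        rw [h2]; exact h1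
      have hev := hclosed u (y / c1) hdiv
      refine hev.mono (fun x hx => ?_)
      have hkey : c1 * Q₀ x ≤
          (if Q₀ x < ⊤ then ENNReal.ofReal ((Q₀ x).toReal + q x + b * ‖x‖ ^ 2) else ⊤) := by
        by_cases hxD : Q₀ x < ⊤
        · rw [if_pos hxD]
          have h1 : c1 * Q₀ x = ENNReal.ofReal ((1 - a) * (Q₀ x).toReal) := by
            rw [ENNReal.ofReal_mul (by linarith), hc1def,
              ENNReal.ofReal_toReal (ne_of_lt hxD)]
          rw [h1]
          exact ENNReal.ofReal_le_ofReal (hlow x hxD)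
        · rw [if_neg hxD]; exact le_top
      have hstrict : y < c1 * Q₀ x := by
        have h1 : c1 * (y / c1) < c1 * Q₀ x :=
          (ENNReal.mul_lt_mul_iff_right hc10 hc1top).mpr hx
        rwa [ENNReal.mul_div_cancel hc10 hc1top] at h1
      exact lt_of_lt_of_le hstrict hkey
end

section
/- Integrability from the Dynkin class: if f : M → ℝ is measurable and there exists t₀ > 0 such that sup_{x∈M} ∫_0^{t₀} ∫_M p(s,x,y)|f(y)| dμ(y) ds < 1, where p(t,x,y) is the strictly positive heat kernel of a connected Riemannian manifold M, then f ∈ L¹_loc(M). -/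
open MeasureTheory Set ENNReal

/-- integrability from the Dynkin class. Let `M` be a connected Riemannian
manifold with volume measure `μ` and minimal heat kernel `p(t,x,y)` of `e^{tΔ/2}`, which is
jointly continuous on `(0,∞) × M × M` and strictly positive. If `f` is measurable and there
is `t₀ > 0` with `sup_x ∫_0^{t₀} ∫_M p(s,x,y)|f(y)| dμ(y) ds < 1`, then `f ∈ L¹_loc(M)`. -/
theorem locally_integrable_of_dynkin_class
    {M : Type*} [TopologicalSpace M] [ConnectedSpace M]
    [MeasurableSpace M] [OpensMeasurableSpace M]
    (μ : Measure M)
    (p : ℝ → M → M → ℝ≥0∞) (f : M → ℝ) (hf : Measurable f)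
    (hppos : ∀ t : ℝ, 0 < t → ∀ x y : M, 0 < p t x y)
    (hpcont : ContinuousOn (fun q : ℝ × M × M => p q.1 q.2.1 q.2.2)
      (Ioi (0:ℝ) ×ˢ (univ : Set (M × M))))
    (hCD : ∃ t₀ : ℝ, 0 < t₀ ∧
      (⨆ x : M, ∫⁻ s in Ioc (0:ℝ) t₀, ∫⁻ y, p s x y * ENNReal.ofReal |f y| ∂μ) < 1) :
    ∀ K : Set M, IsCompact K → ∫⁻ y in K, ENNReal.ofReal |f y| ∂μ < ⊤ := by
  intro K hK
  rcases K.eq_empty_or_nonempty with rfl | hKne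
  · simp
  obtain ⟨x₀, hx₀K⟩ := hKne
  obtain ⟨t₀, ht₀, hsup⟩ := hCD
  set g : ℝ → ℝ≥0∞ := fun s => ∫⁻ y, p s x₀ y * ENNReal.ofReal |f y| ∂μ with hg
  have h1 : ∫⁻ s in Ioc (0:ℝ) t₀, g s < 1 :=
    lt_of_le_of_lt (le_iSup (fun x => ∫⁻ s in Ioc (0:ℝ) t₀,
      ∫⁻ y, p s x y * ENNReal.ofReal |f y| ∂μ) x₀) hsup
  -- find some time s with finite integral
  have hex : ∃ s ∈ Ioc (0:ℝ) t₀, g s < ⊤ := by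
    by_contra hcon
    push_neg at hcon
    have hge : ∀ s ∈ Ioc (0:ℝ) t₀, (⊤ : ℝ≥0∞) ≤ g s := fun s hs => hcon s hs
    have : (⊤ : ℝ≥0∞) ≤ ∫⁻ s in Ioc (0:ℝ) t₀, g s := by
      calc (⊤ : ℝ≥0∞) = ⊤ * volume (Ioc (0:ℝ) t₀) := by
            rw [Real.volume_Ioc, ENNReal.top_mul (by simp; linarith)]
        _ = ∫⁻ _ in Ioc (0:ℝ) t₀, (⊤ : ℝ≥0∞) := (setLIntegral_const _ _).symm
        _ ≤ ∫⁻ s in Ioc (0:ℝ) t₀, g s := setLIntegral_mono' measurableSet_Ioc hge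
    exact absurd (lt_of_le_of_lt this h1) (by simp)
  obtain ⟨s, hsI, hgs⟩ := hex
  -- continuity of y ↦ p s x₀ y
  have hcont : Continuous fun y => p s x₀ y := by
    have hcu : ContinuousOn (fun y : M => p s x₀ y) univ := by
      have hmap : Continuous fun y : M => ((s, x₀, y) : ℝ × M × M) := by continuity
      refine (hpcont.comp hmap.continuousOn ?_)
      intro y _
      exact ⟨hsI.1, trivial⟩
    exact continuousOn_univ.mp hcu
  -- minimum of p s x₀ on K
  obtain ⟨z, hzK, hzmin⟩ := hK.exists_isMinOn ⟨x₀, hx₀K⟩ hcont.continuousOn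
  set c : ℝ≥0∞ := min (p s x₀ z) 1 with hc
  have hc0 : c ≠ 0 := ne_of_gt (lt_min (hppos s hsI.1 x₀ z) one_pos)
  have hctop : c ≠ ⊤ := ne_top_of_le_ne_top one_ne_top (min_le_right _ _)
  have hcle : ∀ y ∈ K, c ≤ p s x₀ y := fun y hy =>
    le_trans (min_le_left _ _) (hzmin hy)
  -- pass to the closure of K, which is measurable
  set L : Set M := closure K with hL
  have hLmeas : MeasurableSet L := measurableSet_closure
  have hcleL : ∀ y ∈ L, c ≤ p s x₀ y := by
    have hclosed : IsClosed {y : M | c ≤ p s x₀ y} :=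
      isClosed_le continuous_const hcont
    intro y hy
    exact hclosed.closure_subset_iff.mpr (fun w hw => hcle w hw) hy
  have habs : Measurable fun y => ENNReal.ofReal |f y| :=
    measurable_ofReal.comp hf.abs
  -- main estimate
  have hbound : c * ∫⁻ y in L, ENNReal.ofReal |f y| ∂μ ≤ g s := by
    rw [← lintegral_const_mul c habs]
    calc ∫⁻ y in L, c * ENNReal.ofReal |f y| ∂μ
        ≤ ∫⁻ y in L, p s x₀ y * ENNReal.ofReal |f y| ∂μ :=
          setLIntegral_mono' hLmeas fun y hy =>
            mul_le_mul_left (hcleL y hy) _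
      _ ≤ g s := setLIntegral_le_lintegral _ _
  have hLfin : ∫⁻ y in L, ENNReal.ofReal |f y| ∂μ ≤ c⁻¹ * g s := by
    rw [← one_mul (∫⁻ y in L, ENNReal.ofReal |f y| ∂μ), ← ENNReal.inv_mul_cancel hc0 hctop,
      mul_assoc]
    exact mul_le_mul_right hbound _
  have hKL : ∫⁻ y in K, ENNReal.ofReal |f y| ∂μ ≤ ∫⁻ y in L, ENNReal.ofReal |f y| ∂μ :=
    lintegral_mono' (Measure.restrict_mono subset_closure le_rfl) le_rfl
  refine lt_of_le_of_lt (hKL.trans hLfin) (ENNReal.mul_lt_top ?_ hgs)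
  exact ENNReal.inv_lt_top.mpr (pos_iff_ne_zero.mpr hc0)
end
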